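/- For 0 ≤ v ≤ 1, r ≤ 1, and t ≥ 1, we have ((1-v) + v t^(-1))^(-1) ≤ t^v ≤ G_{r,v}(t), where G_{r,v}(t) = (v(t-1)/2)(r t^(v-1) + 2 - r) + 1. -/

import Mathlib

open Real

lemma convexOn_sinh_Ici : ConvexOn ℝ (Set.Ici (0:ℝ)) Real.sinh := by
  apply convexOn_of_deriv2_nonneg (convex_Ici 0) Real.continuous_sinh.continuousOn
  · exact Real.differentiable_sinh.differentiableOn
  · rw [Real.deriv_sinh]
    exact Real.differentiable_cosh.differentiableOn
  · intro x hx
    rw [interior_Ici, Set.mem_Ioi] at hx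
    simp only [Function.iterate_succ, Function.iterate_zero, Function.comp, id_eq]
    rw [Real.deriv_sinh, Real.deriv_cosh]
    exact Real.sinh_nonneg_iff.2 hx.le

lemma mul_sinh_le (a b : ℝ) (ha : 0 ≤ a) (hab : a ≤ b) :
    b * Real.sinh a ≤ a * Real.sinh b := by
  rcases eq_or_lt_of_le (ha.trans hab) with hb | hb
  · have ha0 : a = 0 := le_antisymm (hab.trans hb.symm.le) ha
    simp [ha0, ← hb]
  · have hw1 : (0:ℝ) ≤ 1 - a / b := by
      rw [sub_nonneg]; exact div_le_one_of_le₀ hab hb.le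
    have hw2 : (0:ℝ) ≤ a / b := by positivity
    have hw : (1 - a / b) + a / b = 1 := by ring
    have h := convexOn_sinh_Ici.2 (Set.self_mem_Ici) (Set.mem_Ici.2 (ha.trans hab)) hw1 hw2 hw
    simp only [smul_eq_mul, mul_zero, zero_add, Real.sinh_zero] at h
    rw [div_mul_cancel₀ _ hb.ne'] at h
    have := mul_le_mul_of_nonneg_left h hb.le
    calc b * Real.sinh a ≤ b * (a / b * Real.sinh b) := this
      _ = a * Real.sinh b := by field_simp

theorem harmonic_le_pow_le_Grv (t r v : ℝ) (hv0 : 0 ≤ v) (hv1 : v ≤ 1)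
    (hr : r ≤ 1) (ht : 1 ≤ t) :
    ((1 - v) + v * t⁻¹)⁻¹ ≤ t ^ v ∧
    t ^ v ≤ v * (t - 1) / 2 * (r * t ^ (v - 1) + 2 - r) + 1 := by
  have htpos : 0 < t := lt_of_lt_of_le one_pos ht
  have htinv : t⁻¹ ≤ 1 := inv_le_one_of_one_le₀ ht
  have htinvpos : 0 < t⁻¹ := inv_pos.2 htpos
  have hpos : 0 < (1 - v) + v * t⁻¹ := by nlinarith
  have htvpos : 0 < t ^ v := Real.rpow_pos_of_pos htpos v
  constructor
  · have h1 : (t ^ v)⁻¹ ≤ (1 - v) + v * t⁻¹ := by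
      have := Real.geom_mean_le_arith_mean2_weighted (by linarith : (0:ℝ) ≤ 1 - v) hv0
        zero_le_one htinvpos.le (by ring)
      simpa [Real.one_rpow, Real.inv_rpow htpos.le] using this
    rw [inv_le_comm₀ hpos htvpos]
    exact h1
  · -- right inequality
    set L := Real.log t with hL
    have hL0 : 0 ≤ L := Real.log_nonneg ht
    set p := Real.exp (v * L / 2) with hp
    set q := Real.exp ((2 - v) * L / 2) with hqdef
    have hp0 : 0 < p := Real.exp_pos _
    have hq0 : 0 < q := Real.exp_pos _
    have ht_eq : t = p * q := by
      rw [hp, hqdef, ← Real.exp_add]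
      rw [show v * L / 2 + (2 - v) * L / 2 = L by ring]
      exact (Real.exp_log htpos).symm
    have htv : t ^ v = p ^ 2 := by
      rw [Real.rpow_def_of_pos htpos, hp, sq, ← Real.exp_add]
      ring_nf
      rw [hL]; ring_nf
    have htv1 : t ^ (v - 1) = p * q⁻¹ := by
      rw [Real.rpow_def_of_pos htpos, hp, hqdef, ← Real.exp_neg, ← Real.exp_add]
      ring_nf
      rw [hL]; ring_nf
    have key : ((2 - v) * L / 2) * Real.sinh (v * L / 2) ≤
        (v * L / 2) * Real.sinh ((2 - v) * L / 2) :=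
      mul_sinh_le _ _ (by positivity) (by nlinarith)
    rw [Real.sinh_eq, Real.sinh_eq, Real.exp_neg, Real.exp_neg, ← hp, ← hqdef] at key
    have key3 : (2 - v) * (p - p⁻¹) ≤ v * (q - q⁻¹) := by
      rcases eq_or_lt_of_le hL0 with hLz | hLz
      · have hp1 : p = 1 := by rw [hp, ← hLz]; simp
        have hq1 : q = 1 := by rw [hqdef, ← hLz]; simp
        simp [hp1, hq1]
      · have h4 : (0:ℝ) < L / 4 := by linarith
        have : L / 4 * ((2 - v) * (p - p⁻¹)) ≤ L / 4 * (v * (q - q⁻¹)) := by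
          calc L / 4 * ((2 - v) * (p - p⁻¹))
              = ((2 - v) * L / 2) * ((p - p⁻¹) / 2) := by ring
            _ ≤ (v * L / 2) * ((q - q⁻¹) / 2) := key
            _ = L / 4 * (v * (q - q⁻¹)) := by ring
        exact le_of_mul_le_mul_left this h4
    have key5 : (2 - v) * (p ^ 2 * q - q) ≤ v * (p * q ^ 2 - p) := by
      have h := mul_le_mul_of_nonneg_right key3 (mul_pos hp0 hq0).le
      calc (2 - v) * (p ^ 2 * q - q) = (2 - v) * (p - p⁻¹) * (p * q) := by
            field_simp
        _ ≤ v * (q - q⁻¹) * (p * q) := h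
        _ = v * (p * q ^ 2 - p) := by field_simp
    have main : t ^ v ≤ v * (t - 1) / 2 * (t ^ (v - 1) + 1) + 1 := by
      rw [htv, htv1, ht_eq]
      have h2q : (0:ℝ) < 2 * q := by linarith
      calc p ^ 2 ≤ (v * (p * q - 1) * (p + q) + 2 * q) / (2 * q) := by
            rw [le_div_iff₀ h2q]; nlinarith [key5]
        _ = v * (p * q - 1) / 2 * (p * q⁻¹ + 1) + 1 := by field_simp
    have hpre : 0 ≤ v * (t - 1) / 2 := by nlinarith
    have htv1le : t ^ (v - 1) ≤ 1 :=
      Real.rpow_le_one_of_one_le_of_nonpos ht (by linarith)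
    have hstep : t ^ (v - 1) + 1 ≤ r * t ^ (v - 1) + 2 - r := by nlinarith
    calc t ^ v ≤ v * (t - 1) / 2 * (t ^ (v - 1) + 1) + 1 := main
      _ ≤ v * (t - 1) / 2 * (r * t ^ (v - 1) + 2 - r) + 1 := by
          have := mul_le_mul_of_nonneg_left hstep hpre
          linarith
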